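/- Fix n ≥ 2 and let H = ℓ²(Λ̃) be the Hilbert space of square-summable complex functions on the set Λ̃ of all finite words (including the empty word) with letters in {1,…,n}, with standard orthonormal basis {e_α : α ∈ Λ̃}. Suppose V_1,…,V_n are bounded operators on H satisfying V_i e_α = e_{iα} for every word α, where iα denotes the word α with the letter i prepended (this is the full Fock space over ℂⁿ with its left creation operators). Then the maximal commuting piece space H^c(V) = {x ∈ H : (V_i^* V_j^* − V_j^* V_i^*)(V^α)^* x = 0 for all i, j, α} equals the closed linear span of the symmetrized basis vectors { Σ_{σ ∈ S_m} e_{(α_{σ(1)},…,α_{σ(m)})} : m ≥ 0, α = (α_1,…,α_m) a word of length m }, i.e. it is the Boson (symmetric) Fock space over ℂⁿ sitting inside the full Fock space. -/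

import Mathlib

open ContinuousLinearMap

noncomputable def wordProd {n : ℕ} {L : Type*} [NormedAddCommGroup L] [InnerProductSpace ℂ L]
    (R : Fin n → L →L[ℂ] L) (α : List (Fin n)) : L →L[ℂ] L :=
  (α.map R).prod

/-- The maximal commuting piece space of a tuple. -/
noncomputable def commPieceSet {n : ℕ} {L : Type*} [NormedAddCommGroup L]
    [InnerProductSpace ℂ L] [CompleteSpace L] (R : Fin n → L →L[ℂ] L) : Set L :=
  {x : L | ∀ (i j : Fin n) (α : List (Fin n)),
    adjoint (R i) (adjoint (R j) (adjoint (wordProd R α) x)) =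
    adjoint (R j) (adjoint (R i) (adjoint (wordProd R α) x))}

lemma exists_get_equiv {γ : Type*} {l₁ l₂ : List γ} (h : l₁.Perm l₂) :
    ∃ e : Fin l₂.length ≃ Fin l₁.length, ∀ k, l₂.get k = l₁.get (e k) := by
  induction h with
  | nil => exact ⟨Equiv.refl _, fun k => k.elim0⟩
  | cons a h' ih =>
      obtain ⟨e, he⟩ := ih
      refine ⟨(finSuccEquiv _).trans ((Equiv.optionCongr e).trans (finSuccEquiv _).symm),
        fun k => ?_⟩
      refine Fin.cases ?_ (fun j => ?_) k
      · simp
      · simpa using he j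
  | swap a b l =>
      refine ⟨Equiv.swap ⟨0, by simp⟩ ⟨1, by simp⟩, fun k => ?_⟩
      refine Fin.cases ?_ (fun j => ?_) k
      · simp [Equiv.swap_apply_def, Fin.ext_iff]
      · refine Fin.cases ?_ (fun m => ?_) j
        · simp [Equiv.swap_apply_def, Fin.ext_iff]
        · simp [Equiv.swap_apply_def, Fin.ext_iff]
  | trans h₁ h₂ ih₁ ih₂ =>
      obtain ⟨e₁, he₁⟩ := ih₁
      obtain ⟨e₂, he₂⟩ := ih₂
      exact ⟨e₂.trans e₁, fun k => (he₂ k).trans (he₁ (e₂ k))⟩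

section

variable {n : ℕ}

local notation "H" => lp (fun _ : List (Fin n) => ℂ) 2

lemma coord (x : H) (w : List (Fin n)) :
    (inner ℂ (lp.single 2 w (1 : ℂ)) x : ℂ) = x w := by
  rw [lp.inner_single_left]
  simp [RCLike.inner_apply]

lemma adj_coord (A : H →L[ℂ] H) (x : H) (w : List (Fin n)) :
    adjoint A x w = (inner ℂ (A (lp.single 2 w (1 : ℂ))) x : ℂ) := by
  rw [← coord (adjoint A x) w, adjoint_inner_right]

lemma adjV_coord (V : Fin n → H →L[ℂ] H)
    (hV : ∀ (i : Fin n) (α : List (Fin n)),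
      V i (lp.single 2 α (1 : ℂ)) = lp.single 2 (i :: α) (1 : ℂ))
    (i : Fin n) (x : H) (w : List (Fin n)) :
    adjoint (V i) x w = x (i :: w) := by
  rw [adj_coord, hV, coord]

lemma wordProd_single (V : Fin n → H →L[ℂ] H)
    (hV : ∀ (i : Fin n) (α : List (Fin n)),
      V i (lp.single 2 α (1 : ℂ)) = lp.single 2 (i :: α) (1 : ℂ))
    (α β : List (Fin n)) :
    wordProd V α (lp.single 2 β (1 : ℂ)) = lp.single 2 (α ++ β) (1 : ℂ) := by
  induction α with
  | nil => simp [wordProd]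
  | cons a α ih =>
      simp only [wordProd, List.map_cons, List.prod_cons, mul_apply] at ih ⊢
      show V a ((List.map V α).prod (lp.single 2 β 1)) = _
      rw [ih, hV]
      rfl

lemma adjW_coord (V : Fin n → H →L[ℂ] H)
    (hV : ∀ (i : Fin n) (α : List (Fin n)),
      V i (lp.single 2 α (1 : ℂ)) = lp.single 2 (i :: α) (1 : ℂ))
    (α : List (Fin n)) (x : H) (w : List (Fin n)) :
    adjoint (wordProd V α) x w = x (α ++ w) := by
  rw [adj_coord, wordProd_single V hV, coord]

lemma mem_comm_iff (V : Fin n → H →L[ℂ] H)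
    (hV : ∀ (i : Fin n) (α : List (Fin n)),
      V i (lp.single 2 α (1 : ℂ)) = lp.single 2 (i :: α) (1 : ℂ)) (x : H) :
    x ∈ commPieceSet V ↔
      ∀ (i j : Fin n) (α β : List (Fin n)),
        x (α ++ j :: i :: β) = x (α ++ i :: j :: β) := by
  constructor
  · intro h i j α β
    have := congrFun (congrArg (fun (y : H) => (y : ∀ _ : List (Fin n), ℂ)) (h i j α)) β
    simpa only [adjV_coord V hV, adjW_coord V hV] using this
  · intro h i j α
    apply lp.ext
    funext β
    simp only [adjV_coord V hV, adjW_coord V hV]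
    exact h i j α β

lemma symm_of_swaps (x : H)
    (h : ∀ (i j : Fin n) (α β : List (Fin n)),
      x (α ++ j :: i :: β) = x (α ++ i :: j :: β)) :
    ∀ {l₁ l₂ : List (Fin n)}, l₁.Perm l₂ → x l₁ = x l₂ := by
  have key : ∀ {l₁ l₂ : List (Fin n)}, l₁.Perm l₂ → ∀ γ, x (γ ++ l₁) = x (γ ++ l₂) := by
    intro l₁ l₂ hp
    induction hp with
    | nil => intro γ; rfl
    | cons a h' ih =>
        intro γ
        have := ih (γ ++ [a])
        simpa [List.append_assoc] using this
    | swap a b l =>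
        intro γ
        exact h a b γ l
    | trans h₁ h₂ ih₁ ih₂ =>
        intro γ
        exact (ih₁ γ).trans (ih₂ γ)
  intro l₁ l₂ hp
  simpa using key hp []

/-- The set of pointwise symmetric elements. -/
def setS (n : ℕ) : Set (lp (fun _ : List (Fin n) => ℂ) 2) :=
  {x | ∀ l₁ l₂ : List (Fin n), l₁.Perm l₂ → x l₁ = x l₂}

lemma comm_eq_setS (V : Fin n → H →L[ℂ] H)
    (hV : ∀ (i : Fin n) (α : List (Fin n)),
      V i (lp.single 2 α (1 : ℂ)) = lp.single 2 (i :: α) (1 : ℂ)) :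
    commPieceSet V = setS n := by
  ext x
  rw [mem_comm_iff V hV]
  constructor
  · intro h l₁ l₂ hp
    exact symm_of_swaps x h hp
  · intro h i j α β
    exact h _ _ ((List.Perm.swap i j β).append_left α)

/-- `setS` as a submodule. -/
noncomputable def subS (n : ℕ) : Submodule ℂ (lp (fun _ : List (Fin n) => ℂ) 2) where
  carrier := setS n
  add_mem' := by
    intro a b ha hb l₁ l₂ hp
    rw [lp.coeFn_add, Pi.add_apply, Pi.add_apply, ha l₁ l₂ hp, hb l₁ l₂ hp]
  zero_mem' := by
    intro l₁ l₂ hp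
    rfl
  smul_mem' := by
    intro c a ha l₁ l₂ hp
    rw [lp.coeFn_smul, Pi.smul_apply, Pi.smul_apply, ha l₁ l₂ hp]

lemma continuous_eval (w : List (Fin n)) : Continuous (fun x : H => x w) := by
  have : (fun x : H => x w) = fun x : H => (inner ℂ (lp.single 2 w (1 : ℂ)) x : ℂ) := by
    funext x
    rw [coord]
  rw [this]
  exact (innerSL ℂ ((lp.single 2 w (1 : ℂ)) : H)).continuous

lemma isClosed_setS : IsClosed (setS n) := by
  have : setS n = ⋂ (l₁ : List (Fin n)), ⋂ (l₂ : List (Fin n)), ⋂ (_ : l₁.Perm l₂),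
      {x : H | x l₁ = x l₂} := by
    ext x
    simp [setS, Set.mem_iInter]
  rw [this]
  refine isClosed_iInter fun l₁ => isClosed_iInter fun l₂ => isClosed_iInter fun _ => ?_
  exact isClosed_eq (continuous_eval l₁) (continuous_eval l₂)

/-- The symmetrization of a basis vector. -/
noncomputable def symmvec (α : List (Fin n)) : H :=
  ∑ σ : Equiv.Perm (Fin α.length),
    lp.single 2 (List.ofFn fun k => α.get (σ k)) (1 : ℂ)

lemma single_coord (u w : List (Fin n)) :
    (lp.single 2 u (1 : ℂ) : ∀ _ : List (Fin n), ℂ) w = if w = u then 1 else 0 := by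
  by_cases h : w = u
  · subst h; simp [lp.single_apply_self]
  · simp [h, lp.single_apply_ne _ _ _ h]

/-- number of permutations realizing `w` from `α` -/
noncomputable def pcount (α w : List (Fin n)) : ℕ :=
  (Finset.univ.filter
    (fun σ : Equiv.Perm (Fin α.length) => (List.ofFn fun k => α.get (σ k)) = w)).card

lemma symmvec_coord (α w : List (Fin n)) :
    (symmvec α : ∀ _ : List (Fin n), ℂ) w = (pcount α w : ℂ) := by
  classical
  rw [symmvec, lp.coeFn_sum, Finset.sum_apply]
  rw [pcount, Finset.card_filter, Nat.cast_sum]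
  apply Finset.sum_congr rfl
  intro σ _
  rw [single_coord]
  by_cases h : (List.ofFn fun k => α.get (σ k)) = w <;> simp [h, eq_comm]

lemma pcount_le (α : List (Fin n)) {w w' : List (Fin n)} (h : w.Perm w') :
    pcount α w ≤ pcount α w' := by
  classical
  rcases Finset.eq_empty_or_nonempty
    (Finset.univ.filter
      (fun σ : Equiv.Perm (Fin α.length) => (List.ofFn fun k => α.get (σ k)) = w)) with he | hne
  · unfold pcount
    rw [he]
    simp
  · obtain ⟨σ₀, hσ₀⟩ := hne
    rw [Finset.mem_filter] at hσ₀
    have hlen : w.length = α.length := by rw [← hσ₀.2]; simp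
    have h₁ : α.length = w'.length := by rw [← h.length_eq, hlen]
    obtain ⟨e, he'⟩ := exists_get_equiv h
    set ε : Equiv.Perm (Fin α.length) :=
      (finCongr h₁).trans (e.trans (finCongr hlen)) with hε
    refine Finset.card_le_card_of_injOn (fun σ => σ * ε) ?_ ?_
    · intro σ hσ
      rw [Finset.mem_coe, Finset.mem_filter] at hσ ⊢
      refine ⟨Finset.mem_univ _, ?_⟩
      obtain ⟨hσ', rfl⟩ := hσ
      apply List.ext_get
      · simp [h₁]
      · intro k hk1 hk2
        rw [List.get_ofFn, he' ⟨k, hk2⟩, List.get_ofFn]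
        show α.get (σ (ε _)) = _
        congr 1
    · intro a _ b _ hab
      exact mul_right_cancel hab

lemma pcount_perm (α : List (Fin n)) {w w' : List (Fin n)} (h : w.Perm w') :
    pcount α w = pcount α w' :=
  le_antisymm (pcount_le α h) (pcount_le α h.symm)

lemma symmvec_mem_setS (α : List (Fin n)) : symmvec α ∈ setS n := by
  intro l₁ l₂ hp
  rw [symmvec_coord, symmvec_coord, pcount_perm α hp]

lemma symmvec_ofFn {m : ℕ} (f : Fin m → Fin n) :
    symmvec (List.ofFn f) =
      ∑ σ : Equiv.Perm (Fin m), lp.single 2 (List.ofFn (f ∘ σ)) (1 : ℂ) := by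
  rw [symmvec]
  apply Fintype.sum_equiv (Equiv.permCongr (finCongr (by simp : (List.ofFn f).length = m)))
  intro σ'
  congr 1
  apply List.ext_get (by simp)
  intro k hk1 hk2
  rw [List.get_ofFn, List.get_ofFn, List.get_ofFn]
  show f _ = f _
  congr 1

lemma key_span (x : H) (hx : x ∈ setS n) (m : ℕ) :
    ∑ f : Fin m → Fin n, x (List.ofFn f) • symmvec (List.ofFn f) =
      (Nat.factorial m : ℂ) • ∑ f : Fin m → Fin n, lp.single 2 (List.ofFn f) (x (List.ofFn f)) := by
  classical
  have single_eq : ∀ (w : List (Fin n)) (c : ℂ),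
      (lp.single 2 w c : H) = c • (lp.single 2 w (1 : ℂ) : H) := by
    intro w c
    rw [← lp.single_smul]
    norm_num
  calc ∑ f : Fin m → Fin n, x (List.ofFn f) • symmvec (List.ofFn f)
      = ∑ f : Fin m → Fin n, ∑ σ : Equiv.Perm (Fin m),
          x (List.ofFn f) • lp.single 2 (List.ofFn (f ∘ σ)) (1 : ℂ) := by
        refine Finset.sum_congr rfl fun f _ => ?_
        rw [symmvec_ofFn, Finset.smul_sum]
    _ = ∑ σ : Equiv.Perm (Fin m), ∑ f : Fin m → Fin n,
          x (List.ofFn f) • lp.single 2 (List.ofFn (f ∘ σ)) (1 : ℂ) := Finset.sum_comm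
    _ = ∑ σ : Equiv.Perm (Fin m), ∑ f : Fin m → Fin n,
          x (List.ofFn f) • lp.single 2 (List.ofFn f) (1 : ℂ) := by
        refine Finset.sum_congr rfl fun σ _ => ?_
        apply Fintype.sum_equiv (Equiv.arrowCongr σ.symm (Equiv.refl (Fin n)))
        intro f
        have hfe : (Equiv.arrowCongr σ.symm (Equiv.refl (Fin n))) f = f ∘ σ := rfl
        rw [hfe]
        congr 1
        exact hx _ _ (Equiv.Perm.ofFn_comp_perm σ f).symm
    _ = (Nat.factorial m : ℂ) • ∑ f : Fin m → Fin n, lp.single 2 (List.ofFn f) (x (List.ofFn f)) := by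
        rw [Finset.sum_const, Finset.card_univ, Fintype.card_perm, Fintype.card_fin]
        rw [← Nat.cast_smul_eq_nsmul ℂ]
        congr 1
        refine Finset.sum_congr rfl fun f _ => ?_
        exact (single_eq _ _).symm

lemma Q_mem (x : H) (hx : x ∈ setS n) (m : ℕ) :
    (∑ f : Fin m → Fin n, lp.single 2 (List.ofFn f) (x (List.ofFn f)) : H) ∈
      Submodule.span ℂ
        {v : H | ∃ α : List (Fin n),
          v = ∑ σ : Equiv.Perm (Fin α.length),
            lp.single 2 (List.ofFn fun k => α.get (σ k)) (1 : ℂ)} := by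
  have h := key_span x hx m
  have hm : (Nat.factorial m : ℂ) ≠ 0 := Nat.cast_ne_zero.2 (Nat.factorial_ne_zero m)
  have h2 : (∑ f : Fin m → Fin n, lp.single 2 (List.ofFn f) (x (List.ofFn f)) : H) =
      (Nat.factorial m : ℂ)⁻¹ •
        ∑ f : Fin m → Fin n, x (List.ofFn f) • symmvec (List.ofFn f) := by
    rw [h, smul_smul, inv_mul_cancel₀ hm, one_smul]
  rw [h2]
  refine Submodule.smul_mem _ _ (Submodule.sum_mem _ fun f _ => Submodule.smul_mem _ _ ?_)
  exact Submodule.subset_span ⟨List.ofFn f, rfl⟩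

lemma setS_subset_closure (x : H) (hx : x ∈ setS n) :
    x ∈ closure (↑(Submodule.span ℂ
        {v : H | ∃ α : List (Fin n),
          v = ∑ σ : Equiv.Perm (Fin α.length),
            lp.single 2 (List.ofFn fun k => α.get (σ k)) (1 : ℂ)}) : Set H) := by
  classical
  set F : ℕ → Finset (List (Fin n)) := fun N =>
    (Finset.range (N + 1)).biUnion fun m =>
      Finset.image (fun f : Fin m → Fin n => List.ofFn f) Finset.univ with hF
  have hFmono : Monotone F := by
    intro a b hab
    exact Finset.biUnion_subset_biUnion_of_subset_left _
      (Finset.range_mono (by omega : a + 1 ≤ b + 1))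
  have hFex : ∀ w : List (Fin n), ∃ N, w ∈ F N := by
    intro w
    refine ⟨w.length, Finset.mem_biUnion.2 ⟨w.length, Finset.mem_range.2 (by omega), ?_⟩⟩
    exact Finset.mem_image.2 ⟨w.get, Finset.mem_univ _, List.ofFn_get w⟩
  have htend : Filter.Tendsto (fun N => ∑ w ∈ F N, (lp.single 2 w (x w) : H))
      Filter.atTop (nhds x) :=
    (lp.hasSum_single (by norm_num) x).comp
      (Filter.tendsto_atTop_finset_of_monotone hFmono hFex)
  refine mem_closure_of_tendsto htend (Filter.Eventually.of_forall fun N => ?_)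
  have hdisj : ∀ m₁ ∈ Finset.range (N + 1), ∀ m₂ ∈ Finset.range (N + 1), m₁ ≠ m₂ →
      Disjoint (Finset.image (fun f : Fin m₁ → Fin n => List.ofFn f) Finset.univ)
        (Finset.image (fun f : Fin m₂ → Fin n => List.ofFn f) Finset.univ) := by
    intro m₁ _ m₂ _ hne
    refine Finset.disjoint_left.2 fun w hw1 hw2 => hne ?_
    obtain ⟨f, _, rfl⟩ := Finset.mem_image.1 hw1
    obtain ⟨g, _, hg⟩ := Finset.mem_image.1 hw2
    have := congrArg List.length hg
    simpa using this.symm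
  show _ ∈ (_ : Set H)
  rw [hF, Finset.sum_biUnion hdisj]
  refine Submodule.sum_mem _ fun m _ => ?_
  rw [Finset.sum_image (fun a _ b _ h => List.ofFn_injective h)]
  exact Q_mem x hx m

end

/-- for the left creation operators on the full Fock space
`ℓ²(Λ̃)` over `ℂⁿ` (`Λ̃` = all words in `{1,…,n}`), the maximal commuting piece
space is the closed span of the symmetrized basis vectors, i.e. the Boson Fock
space sitting inside the full Fock space. -/
theorem stmt4 {n : ℕ} (hn : 2 ≤ n)
    (V : Fin n → lp (fun _ : List (Fin n) => ℂ) 2 →L[ℂ] lp (fun _ : List (Fin n) => ℂ) 2)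
    (hV : ∀ (i : Fin n) (α : List (Fin n)),
      V i (lp.single 2 α (1 : ℂ)) = lp.single 2 (i :: α) (1 : ℂ)) :
    commPieceSet V =
      ((Submodule.span ℂ
        {v : lp (fun _ : List (Fin n) => ℂ) 2 | ∃ α : List (Fin n),
          v = ∑ σ : Equiv.Perm (Fin α.length),
            lp.single 2 (List.ofFn fun k => α.get (σ k)) (1 : ℂ)}).topologicalClosure :
        Set (lp (fun _ : List (Fin n) => ℂ) 2)) := by
  rw [comm_eq_setS V hV]
  apply Set.Subset.antisymm
  · intro x hx
    rw [Submodule.topologicalClosure_coe]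
    exact setS_subset_closure x hx
  · intro x hx
    have hgen : {v : lp (fun _ : List (Fin n) => ℂ) 2 | ∃ α : List (Fin n),
        v = ∑ σ : Equiv.Perm (Fin α.length),
          lp.single 2 (List.ofFn fun k => α.get (σ k)) (1 : ℂ)} ⊆ ↑(subS n) := by
      rintro v ⟨α, rfl⟩
      exact symmvec_mem_setS α
    have hle := Submodule.topologicalClosure_minimal _
      (Submodule.span_le.2 hgen) isClosed_setS
    exact hle hx
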